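/- arXiv:1009.3975 — 3 statements merged into one kernel-verified Lean document; each statement's English description precedes it below -/
import Mathlib

section
/- Let n ≥ 1, 1 ≤ K ≤ n, and partition {1,…,n} = G ∪ B with |B| = K (so |G| = n − K). Let 0 < δ ≤ M. Then there exist constants c₁, c₂ > 0, depending only on n, K, δ, M, such that for all nonnegative reals λ₁,…,λ_n with δ ≤ λ_g ≤ M for every g ∈ G and 0 ≤ λ_m ≤ M for every m ∈ B, one has c₁ Σ_{m∈B} λ_m ≤ σ_{n−K+1}(λ₁,…,λ_n) ≤ c₂ Σ_{m∈B} λ_m. -/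
open Finset

/-- Elementary symmetric polynomial `σ_p(λ₁,…,λ_n)`. -/
noncomputable def esymm (n p : ℕ) (lam : Fin n → ℝ) : ℝ :=
  ∑ s ∈ Finset.univ.powersetCard p, ∏ i ∈ s, lam i

/-- **Lemma 2.2(a).** If the "good" eigenvalues (indices in `G`) lie
in `[δ, M]` and the "bad" eigenvalues (indices in `B`, `|B| = K`) lie in `[0, M]`,
then `σ_{n−K+1}` is comparable to `Σ_{m∈B} λ_m`, with constants depending only on
`n, K, δ, M`. -/
theorem stmt5
    (n K : ℕ) (hK1 : 1 ≤ K) (hKn : K ≤ n)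
    (δ M : ℝ) (hδ : 0 < δ) (hδM : δ ≤ M) :
    ∃ c₁ c₂ : ℝ, 0 < c₁ ∧ 0 < c₂ ∧
      ∀ G B : Finset (Fin n), G ∪ B = Finset.univ → Disjoint G B → B.card = K →
        ∀ lam : Fin n → ℝ,
          (∀ i, 0 ≤ lam i) →
          (∀ g ∈ G, δ ≤ lam g ∧ lam g ≤ M) →
          (∀ m ∈ B, lam m ≤ M) →
          c₁ * (∑ m ∈ B, lam m) ≤ esymm n (n - K + 1) lam ∧
            esymm n (n - K + 1) lam ≤ c₂ * (∑ m ∈ B, lam m) := by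
  have hM : (0:ℝ) < M := lt_of_lt_of_le hδ hδM
  refine ⟨δ ^ (n - K), (Nat.choose n (n - K + 1)) * M ^ (n - K) + 1, by positivity,
    by positivity, ?_⟩
  intro G B hUnion hDisj hBcard lam hpos hG hB
  have hGcard : G.card = n - K := by
    have h1 : G.card + B.card = n := by
      rw [← Finset.card_union_of_disjoint hDisj, hUnion, Finset.card_univ, Fintype.card_fin]
    omega
  have hall : ∀ i, lam i ≤ M := by
    intro i
    have hi : i ∈ G ∪ B := by rw [hUnion]; exact Finset.mem_univ i
    rcases Finset.mem_union.mp hi with h | h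
    · exact (hG i h).2
    · exact hB i h
  have hBsum : (0:ℝ) ≤ ∑ m ∈ B, lam m := Finset.sum_nonneg fun m _ => hpos m
  constructor
  · -- lower bound
    have hmem : ∀ m ∈ B, insert m G ∈ Finset.univ.powersetCard (n - K + 1) := by
      intro m hm
      rw [Finset.mem_powersetCard]
      refine ⟨Finset.subset_univ _, ?_⟩
      rw [Finset.card_insert_of_notMem (fun h => Finset.disjoint_left.mp hDisj h hm), hGcard]
    have hsub : B.image (fun m => insert m G) ⊆ Finset.univ.powersetCard (n - K + 1) := by
      intro s hs
      rcases Finset.mem_image.mp hs with ⟨m, hm, rfl⟩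
      exact hmem m hm
    have hinj : Set.InjOn (fun m => insert m G) B := by
      intro a ha b hb hab
      have hab' : insert a G = insert b G := hab
      have : a ∈ insert b G := by
        rw [← hab']; exact Finset.mem_insert_self a G
      rcases Finset.mem_insert.mp this with h | h
      · exact h
      · exact absurd h (Finset.disjoint_right.mp hDisj ha)
    calc δ ^ (n - K) * ∑ m ∈ B, lam m = ∑ m ∈ B, δ ^ (n - K) * lam m := by
          rw [Finset.mul_sum]
      _ ≤ ∑ m ∈ B, ∏ i ∈ insert m G, lam i := by
          refine Finset.sum_le_sum fun m hm => ?_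
          rw [Finset.prod_insert (fun h => Finset.disjoint_left.mp hDisj h hm)]
          rw [mul_comm (δ ^ (n - K))]
          refine mul_le_mul_of_nonneg_left ?_ (hpos m)
          calc δ ^ (n - K) = ∏ _i ∈ G, δ := by rw [Finset.prod_const, hGcard]
            _ ≤ ∏ i ∈ G, lam i :=
              Finset.prod_le_prod (fun _ _ => le_of_lt hδ) (fun i hi => (hG i hi).1)
      _ = ∑ s ∈ B.image (fun m => insert m G), ∏ i ∈ s, lam i :=
          (Finset.sum_image (f := fun s => ∏ i ∈ s, lam i) (fun a ha b hb h => hinj ha hb h)).symm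
      _ ≤ esymm n (n - K + 1) lam := by
          exact Finset.sum_le_sum_of_subset_of_nonneg hsub
            (fun s _ _ => Finset.prod_nonneg fun i _ => hpos i)
  · -- upper bound
    have hterm : ∀ s ∈ Finset.univ.powersetCard (n - K + 1),
        ∏ i ∈ s, lam i ≤ M ^ (n - K) * ∑ m ∈ B, lam m := by
      intro s hs
      rw [Finset.mem_powersetCard] at hs
      obtain ⟨-, hscard⟩ := hs
      have hne : (s ∩ B).Nonempty := by
        rw [← Finset.card_pos]
        have hsd : s \ B ⊆ G := by
          intro i hi
          rw [Finset.mem_sdiff] at hi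
          have : i ∈ G ∪ B := by rw [hUnion]; exact Finset.mem_univ i
          rcases Finset.mem_union.mp this with h | h
          · exact h
          · exact absurd h hi.2
        have h1 : (s \ B).card ≤ n - K := hGcard ▸ Finset.card_le_card hsd
        have h2 : (s \ B).card + (s ∩ B).card = s.card := by
          rw [Finset.card_sdiff_add_card_inter]
        omega
      obtain ⟨m, hm⟩ := hne
      rw [Finset.mem_inter] at hm
      have hms : m ∈ s := hm.1
      have hmB : m ∈ B := hm.2
      calc ∏ i ∈ s, lam i = lam m * ∏ i ∈ s.erase m, lam i :=
            (Finset.mul_prod_erase s lam hms).symm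
        _ ≤ lam m * M ^ (n - K) := by
            refine mul_le_mul_of_nonneg_left ?_ (hpos m)
            calc ∏ i ∈ s.erase m, lam i ≤ ∏ _i ∈ s.erase m, M :=
                  Finset.prod_le_prod (fun i _ => hpos i) (fun i _ => hall i)
              _ = M ^ (n - K) := by
                  rw [Finset.prod_const, Finset.card_erase_of_mem hms, hscard]
                  congr 1
        _ ≤ M ^ (n - K) * ∑ m ∈ B, lam m := by
            rw [mul_comm]
            refine mul_le_mul_of_nonneg_left ?_ (by positivity)
            exact Finset.single_le_sum (fun i _ => hpos i) hmB
    calc esymm n (n - K + 1) lam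
        ≤ ∑ _s ∈ Finset.univ.powersetCard (n - K + 1), M ^ (n - K) * ∑ m ∈ B, lam m :=
          Finset.sum_le_sum hterm
      _ = (Nat.choose n (n - K + 1)) * (M ^ (n - K) * ∑ m ∈ B, lam m) := by
          rw [Finset.sum_const, Finset.card_powersetCard, Finset.card_univ, Fintype.card_fin,
            nsmul_eq_mul]
      _ ≤ ((Nat.choose n (n - K + 1)) * M ^ (n - K) + 1) * ∑ m ∈ B, lam m := by
          rw [← mul_assoc]
          exact mul_le_mul_of_nonneg_right (by nlinarith [hBsum]) hBsum
end

section
/- Let J ⊆ L be finite index sets, let a_j > 0 for j ∈ J with S := Σ_{j∈J} a_j, let t > 0, ε ≥ 0, and let (p_ℓ)_{ℓ∈L}, (q_j)_{j∈J} be real numbers satisfying t·S = Σ_{ℓ∈L} p_ℓ² + ε. Define D := −(1/2) Σ_{j,k∈J, j≠k} (a_j a_k/(t S)) (p_k q_k/a_k − p_j q_j/a_j)² + Σ_{j∈J} q_j² (S/a_j − 1). Then D = (1/(2 t S)) Σ_{j,k∈J, j≠k} (q_j p_k a_k + q_k p_j a_j)²/(a_j a_k) + (1/(t S)) Σ_{j∈J}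 q_j² Σ_{k∈J, k≠j} (a_k/a_j)(Σ_{ℓ∈L, ℓ∉{j,k}} p_ℓ² + ε). In particular D ≥ 0. -/
open Finset

private lemma antisym_sum_zero {L : Type*} [DecidableEq L] (J : Finset L) (F : L → L → ℝ)
    (h : ∀ j ∈ J, ∀ k ∈ J, F j k + F k j = 0) :
    ∑ j ∈ J, ∑ k ∈ J.erase j, F j k = 0 := by
  have hdiag : ∀ j ∈ J, F j j = 0 := fun j hj => by have := h j hj j hj; linarith
  have h1 : ∑ j ∈ J, ∑ k ∈ J.erase j, F j k = ∑ j ∈ J, ∑ k ∈ J, F j k := by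
    refine Finset.sum_congr rfl fun j hj => ?_
    rw [Finset.sum_erase_eq_sub hj, hdiag j hj, sub_zero]
  have h2 : ∑ j ∈ J, ∑ k ∈ J, F j k = - ∑ j ∈ J, ∑ k ∈ J, F j k := by
    calc ∑ j ∈ J, ∑ k ∈ J, F j k = ∑ j ∈ J, ∑ k ∈ J, (- F k j) := by
          refine Finset.sum_congr rfl fun j hj => Finset.sum_congr rfl fun k hk => ?_
          have := h j hj k hk; linarith
      _ = - ∑ j ∈ J, ∑ k ∈ J, F k j := by rw [← Finset.sum_neg_distrib]; simp
      _ = - ∑ j ∈ J, ∑ k ∈ J, F j k := by rw [Finset.sum_comm]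
  rw [h1]; linarith

/-- **the 'D terms' identity.** -/
theorem stmt14
    {L : Type*} [Fintype L] [DecidableEq L]
    (J : Finset L) (a : L → ℝ) (ha : ∀ j ∈ J, 0 < a j)
    (t ε : ℝ) (ht : 0 < t) (hε : 0 ≤ ε)
    (p q : L → ℝ)
    (S : ℝ) (hS : S = ∑ j ∈ J, a j)
    (hcon : t * S = (∑ ℓ, (p ℓ) ^ 2) + ε)
    (D : ℝ)
    (hD : D = -(1/2) * (∑ j ∈ J, ∑ k ∈ J.erase j,
            (a j * a k / (t * S)) * (p k * q k / a k - p j * q j / a j) ^ 2)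
          + ∑ j ∈ J, (q j) ^ 2 * (S / a j - 1)) :
    D = (1 / (2 * t * S)) * (∑ j ∈ J, ∑ k ∈ J.erase j,
            (q j * p k * a k + q k * p j * a j) ^ 2 / (a j * a k))
        + (1 / (t * S)) * ∑ j ∈ J, (q j) ^ 2 *
            ∑ k ∈ J.erase j, (a k / a j) * ((∑ ℓ ∈ Finset.univ \ {j, k}, (p ℓ) ^ 2) + ε)
      ∧ 0 ≤ D := by
  rcases J.eq_empty_or_nonempty with rfl | hne
  · simp at hD
    simp [hD]
  -- nonempty case
  have hS0 : 0 < S := hS ▸ Finset.sum_pos ha hne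
  have hT : 0 < t * S := mul_pos ht hS0
  have hTne : t * S ≠ 0 := ne_of_gt hT
  -- the inner ℓ-sum
  have hinner : ∀ j ∈ J, ∀ k ∈ J.erase j,
      (∑ ℓ ∈ Finset.univ \ {j, k}, (p ℓ) ^ 2) + ε = t * S - p j ^ 2 - p k ^ 2 := by
    intro j hj k hk
    have hjk : j ≠ k := (Finset.ne_of_mem_erase hk).symm
    have hsub : ({j, k} : Finset L) ⊆ Finset.univ := Finset.subset_univ _
    have hsd : ∑ ℓ ∈ Finset.univ \ {j, k}, (p ℓ) ^ 2
        = (∑ ℓ, (p ℓ) ^ 2) - ∑ ℓ ∈ ({j, k} : Finset L), (p ℓ) ^ 2 :=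
      Finset.sum_sdiff_eq_sub hsub
    rw [hsd, Finset.sum_pair hjk, hcon]; ring
  -- key equality
  have key : D = (1 / (2 * t * S)) * (∑ j ∈ J, ∑ k ∈ J.erase j,
            (q j * p k * a k + q k * p j * a j) ^ 2 / (a j * a k))
        + (1 / (t * S)) * ∑ j ∈ J, (q j) ^ 2 *
            ∑ k ∈ J.erase j, (a k / a j) * ((∑ ℓ ∈ Finset.univ \ {j, k}, (p ℓ) ^ 2) + ε) := by
    set G : L → L → ℝ := fun j k =>
      (1 / (2 * t * S)) * ((q j * p k * a k + q k * p j * a j) ^ 2 / (a j * a k))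
      + (1 / (t * S)) * (q j ^ 2 * ((a k / a j) * (t * S - p j ^ 2 - p k ^ 2)))
      - (-(1/2) * ((a j * a k / (t * S)) * (p k * q k / a k - p j * q j / a j) ^ 2))
      - q j ^ 2 * (a k / a j) with hG
    have hanti : ∀ j ∈ J, ∀ k ∈ J, G j k + G k j = 0 := by
      intro j hj k hk
      have haj := (ha j hj).ne'
      have hak := (ha k hk).ne'
      rw [hG]
      field_simp
      ring
    have hzero : ∑ j ∈ J, ∑ k ∈ J.erase j, G j k = 0 := antisym_sum_zero J G hanti
    -- rewrite D's second sum as a double sum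
    have hd2 : ∀ j ∈ J, (q j) ^ 2 * (S / a j - 1)
        = ∑ k ∈ J.erase j, q j ^ 2 * (a k / a j) := by
      intro j hj
      have haj := (ha j hj).ne'
      have hsum : ∑ k ∈ J.erase j, a k = S - a j := by
        rw [hS]; exact Finset.sum_erase_eq_sub hj
      rw [← Finset.mul_sum, ← Finset.sum_div, hsum]
      field_simp
      try ring
    -- rewrite the RHS second sum using hinner
    have hrhs2 : ∀ j ∈ J, (q j) ^ 2 *
        ∑ k ∈ J.erase j, (a k / a j) * ((∑ ℓ ∈ Finset.univ \ {j, k}, (p ℓ) ^ 2) + ε)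
        = ∑ k ∈ J.erase j, q j ^ 2 * ((a k / a j) * (t * S - p j ^ 2 - p k ^ 2)) := by
      intro j hj
      rw [Finset.mul_sum]
      exact Finset.sum_congr rfl fun k hk => by rw [hinner j hj k hk]
    calc D = -(1/2) * (∑ j ∈ J, ∑ k ∈ J.erase j,
            (a j * a k / (t * S)) * (p k * q k / a k - p j * q j / a j) ^ 2)
          + ∑ j ∈ J, (q j) ^ 2 * (S / a j - 1) := hD
      _ = ∑ j ∈ J, ∑ k ∈ J.erase j,
            (-(1/2) * ((a j * a k / (t * S)) * (p k * q k / a k - p j * q j / a j) ^ 2)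
              + q j ^ 2 * (a k / a j)) := by
          rw [Finset.mul_sum]
          rw [← Finset.sum_add_distrib]
          refine Finset.sum_congr rfl fun j hj => ?_
          rw [hd2 j hj, Finset.mul_sum, ← Finset.sum_add_distrib]
      _ = ∑ j ∈ J, ∑ k ∈ J.erase j,
            ((1 / (2 * t * S)) * ((q j * p k * a k + q k * p j * a j) ^ 2 / (a j * a k))
              + (1 / (t * S)) * (q j ^ 2 * ((a k / a j) * (t * S - p j ^ 2 - p k ^ 2)))) := by
          have : ∑ j ∈ J, ∑ k ∈ J.erase j,
              ((1 / (2 * t * S)) * ((q j * p k * a k + q k * p j * a j) ^ 2 / (a j * a k))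
                + (1 / (t * S)) * (q j ^ 2 * ((a k / a j) * (t * S - p j ^ 2 - p k ^ 2))))
              - ∑ j ∈ J, ∑ k ∈ J.erase j,
              (-(1/2) * ((a j * a k / (t * S)) * (p k * q k / a k - p j * q j / a j) ^ 2)
                + q j ^ 2 * (a k / a j)) = 0 := by
            rw [← hzero, ← Finset.sum_sub_distrib]
            refine Finset.sum_congr rfl fun j hj => ?_
            rw [← Finset.sum_sub_distrib]
            refine Finset.sum_congr rfl fun k hk => ?_
            rw [hG]; ring
          linarith
      _ = (1 / (2 * t * S)) * (∑ j ∈ J, ∑ k ∈ J.erase j,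
            (q j * p k * a k + q k * p j * a j) ^ 2 / (a j * a k))
        + (1 / (t * S)) * ∑ j ∈ J, (q j) ^ 2 *
            ∑ k ∈ J.erase j, (a k / a j) * ((∑ ℓ ∈ Finset.univ \ {j, k}, (p ℓ) ^ 2) + ε) := by
          rw [Finset.mul_sum, Finset.mul_sum, ← Finset.sum_add_distrib]
          refine Finset.sum_congr rfl fun j hj => ?_
          rw [hrhs2 j hj, Finset.mul_sum, Finset.mul_sum, ← Finset.sum_add_distrib]
  refine ⟨key, ?_⟩
  rw [key]
  have h1 : 0 ≤ (1 / (2 * t * S)) * (∑ j ∈ J, ∑ k ∈ J.erase j,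
      (q j * p k * a k + q k * p j * a j) ^ 2 / (a j * a k)) := by
    apply mul_nonneg (by positivity)
    refine Finset.sum_nonneg fun j hj => Finset.sum_nonneg fun k hk => ?_
    exact div_nonneg (sq_nonneg _)
      (mul_nonneg (ha j hj).le (ha k (Finset.mem_of_mem_erase hk)).le)
  have h2 : 0 ≤ (1 / (t * S)) * ∑ j ∈ J, (q j) ^ 2 *
      ∑ k ∈ J.erase j, (a k / a j) * ((∑ ℓ ∈ Finset.univ \ {j, k}, (p ℓ) ^ 2) + ε) := by
    apply mul_nonneg (by positivity)
    refine Finset.sum_nonneg fun j hj => mul_nonneg (sq_nonneg _) ?_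
    refine Finset.sum_nonneg fun k hk => mul_nonneg
      (div_nonneg (ha k (Finset.mem_of_mem_erase hk)).le (ha j hj).le) ?_
    exact add_nonneg (Finset.sum_nonneg fun ℓ _ => sq_nonneg _) hε
  linarith
end

section
/- Let t > 0, let a₁, a₂ > 0 with S := a₁ + a₂, let (b_{jk})_{j,k∈{1,2}} be a symmetric array of reals, let q₁, q₂ be reals, let L be a finite index set containing {1,2} with reals p_ℓ for ℓ ∈ L, and let ε ≥ 0 satisfy t·S = Σ_{ℓ∈L} p_ℓ² + ε. Define Q := t [ (1/(2S)) Σ_{j≠k} (a_k b_{jj} − a_j b_{kk})²/(a_j a_k) + Σ_{j≠k} b_{jk}²/a_j ] − Σ_{j≠k} (2 p_j q_j/(a_j S)) (a_k b_{jj} − a_j b_{kk}) − 2 Σ_{j≠k} p_k q_j b_{jk}/a_j + Σ_{j∈{1,2}} q_j² (S/a_j − 1), where all sums over j ≠ k range over ordered pairs of distinct indices in {1,2}. Then Q ≥ 0. -/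
open Finset

/-- **nonnegativity of Q, the 'fourth formula'.** With two good
directions (`a 0, a 1 > 0`, `S = a 0 + a 1`), `t > 0`, a symmetric array `b`,
reals `q j`, reals `p ℓ` over a finite index set `L` containing the two good
indices (via the embedding `e`), `ε ≥ 0`, and the Donaldson constraint
`t·S = Σ_ℓ p_ℓ² + ε`, the quantity `Q` is nonnegative. Sums over `j ≠ k` range
over ordered pairs of distinct indices in `{0,1}` (i.e. `{1,2}`). -/
theorem stmt16
    {L : Type*} [Fintype L] (e : Fin 2 ↪ L)
    (t ε : ℝ) (ht : 0 < t) (hε : 0 ≤ ε)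
    (a : Fin 2 → ℝ) (ha : ∀ j, 0 < a j)
    (b : Fin 2 → Fin 2 → ℝ) (hb : ∀ j k, b j k = b k j)
    (q : Fin 2 → ℝ) (p : L → ℝ)
    (S : ℝ) (hS : S = a 0 + a 1)
    (hcon : t * S = (∑ ℓ, (p ℓ) ^ 2) + ε)
    (Q : ℝ)
    (hQ : Q = t * ((1 / (2 * S)) * (∑ j : Fin 2, ∑ k ∈ Finset.univ.erase j,
              (a k * b j j - a j * b k k) ^ 2 / (a j * a k))
            + ∑ j : Fin 2, ∑ k ∈ Finset.univ.erase j, (b j k) ^ 2 / a j)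
          - (∑ j : Fin 2, ∑ k ∈ Finset.univ.erase j,
              (2 * p (e j) * q j / (a j * S)) * (a k * b j j - a j * b k k))
          - 2 * (∑ j : Fin 2, ∑ k ∈ Finset.univ.erase j,
              p (e k) * q j * b j k / a j)
          + ∑ j : Fin 2, (q j) ^ 2 * (S / a j - 1)) :
    0 ≤ Q := by
  classical
  have ha0 := ha 0
  have ha1 := ha 1
  have hS0 : 0 < S := by rw [hS]; linarith
  have ha0' : (a 0 : ℝ) ≠ 0 := ne_of_gt ha0
  have ha1' : (a 1 : ℝ) ≠ 0 := ne_of_gt ha1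
  have hS' : S ≠ 0 := ne_of_gt hS0
  -- the constraint gives tS ≥ p (e 0)² + p (e 1)²
  have hsum : p (e 0) ^ 2 + p (e 1) ^ 2 ≤ ∑ ℓ, (p ℓ) ^ 2 := by
    have h01 : e 0 ≠ e 1 := e.injective.ne (by decide)
    calc p (e 0) ^ 2 + p (e 1) ^ 2 = ∑ ℓ ∈ ({e 0, e 1} : Finset L), (p ℓ) ^ 2 :=
          (Finset.sum_pair (f := fun ℓ => p ℓ ^ 2) h01).symm
      _ ≤ ∑ ℓ, (p ℓ) ^ 2 :=
          Finset.sum_le_sum_of_subset_of_nonneg (Finset.subset_univ _)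
            (fun i _ _ => sq_nonneg _)
  have hPS : p (e 0) ^ 2 + p (e 1) ^ 2 ≤ t * S := by
    rw [hcon]; linarith
  -- expand the Fin 2 sums in hQ
  have he0 : (Finset.univ.erase (0 : Fin 2)) = {1} := by decide
  have he1 : (Finset.univ.erase (1 : Fin 2)) = {0} := by decide
  simp only [Fin.sum_univ_two, he0, he1, Finset.sum_singleton] at hQ
  have hb01 : b 1 0 = b 0 1 := hb 1 0
  rw [hb01] at hQ
  -- the key polynomial identity (sum of squares after clearing denominators)
  have key : t * S * a 0 * a 1 * Q =
      (t * (a 1 * b 0 0 - a 0 * b 1 1) - (a 1 * p (e 0) * q 0 - a 0 * p (e 1) * q 1)) ^ 2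
      + (t * S * b 0 1 - (a 1 * p (e 1) * q 0 + a 0 * p (e 0) * q 1)) ^ 2
      + (t * S - p (e 0) ^ 2 - p (e 1) ^ 2) * ((a 1) ^ 2 * (q 0) ^ 2 + (a 0) ^ 2 * (q 1) ^ 2) := by
    rw [hQ, hS]
    field_simp
    ring
  have hnn : 0 ≤ t * S * a 0 * a 1 * Q := by
    rw [key]
    have h1 : 0 ≤ (t * S - p (e 0) ^ 2 - p (e 1) ^ 2) *
        ((a 1) ^ 2 * (q 0) ^ 2 + (a 0) ^ 2 * (q 1) ^ 2) := by
      apply mul_nonneg (by linarith)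
      positivity
    positivity
  have hpos : 0 < t * S * a 0 * a 1 := by positivity
  exact nonneg_of_mul_nonneg_right hnn hpos
end
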